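/- Let $E$ be a real normed space, $\Omega \subset E$ open, $\hat{x} \in \Omega$, and $(h_n)$ a sequence of functions Lipschitz on $B(\hat{x},r)\cap\Omega$ satisfying property (H) at $\hat{x}$: each $D^+ h_n(\hat{x})$ is sublinear, and there exists $h_\infty$ Lipschitz on $B(\hat{x},r)\cap\Omega$ with $h_\infty(\hat{x}) = \lim_n h_n(\hat{x})$ and $\|h_n - h_\infty\|_{\hat{x},r} \to 0$. Then either the set $\{(x,t) \in \Omega \times [0,1] : \sup_{n} (h_n(x) - (1-t) h_n(\hat{x})) < 0\}$ is nonempty, or there exist nonnegative reals $(\alpha_\infty, \alpha_0, \alpha_1, \ldots)$ with $\alpha_\infty + \sum_n \alpha_n = 1$, $\alpha_\infty h_\infty(\hat{x}) + \sum_n \alpha_n h_n(\hat{x}) \geq 0$, and $\alpha_\infty D^+ h_\infty(\hat{x})(u) + \sum_n \alpha_n D^+ h_n(\hat{x})(u) \geq 0$ for all $u \in E$. -/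

import Mathlib

open Filter Topology BoundedContinuousFunction

lemma myHB {X : Type*} [AddCommGroup X] [Module ℝ X] (p : X → ℝ)
    (hom : ∀ c : ℝ, 0 < c → ∀ x, p (c • x) = c * p x)
    (add : ∀ x y, p (x + y) ≤ p x + p y) :
    ∃ L : X →ₗ[ℝ] ℝ, ∀ x, L x ≤ p x := by
  have hp0 : 0 ≤ p 0 := by have := add 0 0; simp at this; linarith
  have hf : ∀ x : (⟨⊥, 0⟩ : X →ₗ.[ℝ] ℝ).domain, (⟨⊥, 0⟩ : X →ₗ.[ℝ] ℝ) x ≤ p x := by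
    rintro ⟨x, hx⟩
    rcases (Submodule.mem_bot ℝ).1 hx with rfl
    simpa using hp0
  obtain ⟨g, -, hg⟩ := exists_extension_of_le_sublinear _ p hom add hf
  exact ⟨g, hg⟩

lemma bddU_of_abs {f : ℝ → ℝ} {l : Filter ℝ} {B : ℝ} (hf : ∀ᶠ τ in l, |f τ| ≤ B) :
    l.IsBoundedUnder (· ≤ ·) f :=
  ⟨B, eventually_map.mpr (hf.mono fun _ h => (abs_le.1 h).2)⟩

lemma bddL_of_abs {f : ℝ → ℝ} {l : Filter ℝ} {B : ℝ} (hf : ∀ᶠ τ in l, |f τ| ≤ B) :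
    l.IsBoundedUnder (· ≥ ·) f :=
  ⟨-B, eventually_map.mpr (hf.mono fun _ h => (abs_le.1 h).1)⟩

lemma limsup_le_limsup_add {f g : ℝ → ℝ} {l : Filter ℝ} [l.NeBot] {a B : ℝ}
    (hfg : ∀ᶠ τ in l, f τ ≤ g τ + a)
    (hf : ∀ᶠ τ in l, |f τ| ≤ B) (hg : ∀ᶠ τ in l, |g τ| ≤ B) :
    limsup f l ≤ limsup g l + a := by
  have h1 : limsup f l ≤ limsup (fun τ => g τ + a) l := by
    refine limsup_le_limsup hfg (bddL_of_abs hf).isCoboundedUnder_le ?_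
    exact ⟨B + a, eventually_map.mpr ((hg.mono fun τ h => by
      have := (abs_le.1 h).2; linarith))⟩
  rwa [limsup_add_const l g a (bddU_of_abs hg) (bddL_of_abs hg).isCoboundedUnder_le] at h1

lemma abs_limsup_diff_le {f g : ℝ → ℝ} {l : Filter ℝ} [l.NeBot] {a B : ℝ}
    (hfg : ∀ᶠ τ in l, |f τ - g τ| ≤ a)
    (hf : ∀ᶠ τ in l, |f τ| ≤ B) (hg : ∀ᶠ τ in l, |g τ| ≤ B) :
    |limsup f l - limsup g l| ≤ a := by
  rw [abs_le]
  constructor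
  · have := limsup_le_limsup_add (f := g) (g := f)
      (hfg.mono fun τ h => by have := (abs_le.1 h).1; linarith) hg hf
    linarith
  · have := limsup_le_limsup_add (f := f) (g := g)
      (hfg.mono fun τ h => by have := (abs_le.1 h).2; linarith) hf hg
    linarith

lemma real_le_of_forall_pos {a b : ℝ} (h : ∀ ε : ℝ, 0 < ε → a ≤ b + ε) : a ≤ b := by
  by_contra hc
  push_neg at hc
  have := h ((a - b)/2) (by linarith)
  linarith

lemma quot_bound {A c τ : ℝ} (hτ : 0 < τ) (h : |A| ≤ c * τ) : |A / τ| ≤ c := by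
  rw [abs_div, abs_of_pos hτ, div_le_iff₀ hτ]; exact h

lemma bound_of_tendsto {f : ℕ → ℝ} {l : ℝ} (hf : Filter.Tendsto f atTop (𝓝 l)) :
    ∃ C : ℝ, ∀ n, |f n| ≤ C := by
  have := Metric.isBounded_range_of_tendsto f hf
  obtain ⟨C, hC⟩ := Metric.isBounded_range_iff.mp this
  refine ⟨|f 0| + C, fun n => ?_⟩
  have := hC n 0
  rw [Real.dist_eq] at this
  have h1 := abs_sub_abs_le_abs_sub (f n) (f 0)
  linarith

noncomputable def eb (n : ℕ) : ℕ →ᵇ ℝ :=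
  ofNormedAddCommGroupDiscrete (fun m => if m = n then 1 else 0) 1
    (by intro m; dsimp; split <;> simp)

@[simp] lemma eb_apply (n m : ℕ) : eb n m = if m = n then 1 else 0 := rfl

lemma dual_decomp (L : (ℕ →ᵇ ℝ) →ₗ[ℝ] ℝ)
    (hL : ∀ (g : ℕ →ᵇ ℝ) (M : ℝ), (∀ n, g n ≤ M) → L g ≤ M) :
    ∃ α : ℕ → ℝ, (∀ n, 0 ≤ α n) ∧ Summable α ∧ (∑' n, α n) ≤ 1 ∧
      ∀ (g : ℕ →ᵇ ℝ) (l : ℝ), Tendsto (fun n => g n) atTop (𝓝 l) →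
        L g ≤ (1 - ∑' n, α n) * l + ∑' n, α n * g n := by
  set α : ℕ → ℝ := fun n => L (eb n) with hα
  have hα0 : ∀ n, 0 ≤ α n := by
    intro n
    have := hL (-eb n) 0 (by intro m; simp; split <;> norm_num)
    simp only [map_neg] at this
    linarith
  have hsum_le : ∀ N, ∑ n ∈ Finset.range N, α n ≤ 1 := by
    intro N
    have : ∑ n ∈ Finset.range N, α n = L (∑ n ∈ Finset.range N, eb n) := by
      rw [map_sum]
    rw [this]
    refine hL _ 1 ?_
    intro m
    rw [BoundedContinuousFunction.coe_sum]
    simp only [Finset.sum_apply, eb_apply]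
    rw [Finset.sum_ite_eq (Finset.range N) m (fun _ => (1:ℝ))]
    split <;> norm_num
  have hsummable : Summable α := summable_of_sum_range_le hα0 hsum_le
  have htsum_le : (∑' n, α n) ≤ 1 := Real.tsum_le_of_sum_range_le hα0 hsum_le
  have hone : L (BoundedContinuousFunction.const ℕ (1:ℝ)) = 1 := by
    have h1 := hL (BoundedContinuousFunction.const ℕ (1:ℝ)) 1 (by intro m; simp)
    have h2 := hL (-(BoundedContinuousFunction.const ℕ (1:ℝ))) (-1) (by intro m; simp)
    simp only [map_neg] at h2
    linarith
  refine ⟨α, hα0, hsummable, htsum_le, ?_⟩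
  intro g l hg
  have hgsummable : Summable (fun n => α n * g n) := by
    refine Summable.of_norm_bounded (hsummable.mul_right ‖g‖) ?_
    intro n
    rw [Real.norm_eq_abs, abs_mul, abs_of_nonneg (hα0 n)]
    have : |g n| ≤ ‖g‖ := by
      rw [← Real.norm_eq_abs]; exact g.norm_coe_le_norm n
    exact mul_le_mul_of_nonneg_left this (hα0 n)
  refine le_of_forall_pos_le_add ?_
  intro ε hε
  obtain ⟨N₀, hN₀⟩ := (Metric.tendsto_atTop.mp hg) ε hε
  -- for each N ≥ N₀, bound
  have key : ∀ N ≥ N₀, L g ≤ (1 - ∑ n ∈ Finset.range N, α n) * l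
      + ∑ n ∈ Finset.range N, α n * g n + ε := by
    intro N hN
    set gN : ℕ →ᵇ ℝ := g - l • BoundedContinuousFunction.const ℕ (1:ℝ)
      - ∑ n ∈ Finset.range N, (g n - l) • eb n with hgN
    have hgNval : ∀ m, gN m = if m < N then 0 else g m - l := by
      intro m
      simp only [hgN, BoundedContinuousFunction.coe_sub, Pi.sub_apply,
        BoundedContinuousFunction.coe_smul, Pi.smul_apply,
        BoundedContinuousFunction.const_apply, smul_eq_mul, mul_one,
        BoundedContinuousFunction.coe_sum, Finset.sum_apply, eb_apply]
      have hs : ∑ n ∈ Finset.range N, (g n - l) * (if m = n then (1:ℝ) else 0)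
          = if m < N then g m - l else 0 := by
        by_cases hm : m < N
        · rw [Finset.sum_eq_single m (fun b _ hb => by rw [if_neg (Ne.symm hb), mul_zero])
            (fun hmm => absurd (Finset.mem_range.mpr hm) hmm), if_pos rfl, if_pos hm, mul_one]
        · rw [if_neg hm, Finset.sum_eq_zero]
          intro b hb
          rw [if_neg, mul_zero]
          intro hbm; subst hbm; exact hm (Finset.mem_range.mp hb)
      rw [hs]
      split <;> ring
    have hgNle : L gN ≤ ε := by
      refine hL gN ε ?_
      intro m
      rw [hgNval m]
      split
      · linarith
      · have := hN₀ m (by omega)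
        rw [Real.dist_eq] at this
        exact (abs_le.mp this.le).2
    have hLg : L g = L gN + l + ∑ n ∈ Finset.range N, α n * (g n - l) := by
      have hexp : L gN = L g - l * L (BoundedContinuousFunction.const ℕ (1:ℝ))
          - ∑ n ∈ Finset.range N, (g n - l) * α n := by
        simp only [hgN, map_sub, map_smul, map_sum, smul_eq_mul]; rfl
      rw [hexp, hone]
      rw [Finset.sum_congr rfl (fun n _ => (mul_comm (g n - l) (α n)))]
      ring
    calc L g = L gN + l + ∑ n ∈ Finset.range N, α n * (g n - l) := hLg
      _ ≤ ε + l + ∑ n ∈ Finset.range N, α n * (g n - l) := by linarith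
      _ = (1 - ∑ n ∈ Finset.range N, α n) * l + ∑ n ∈ Finset.range N, α n * g n + ε := by
          have hsplit : ∑ n ∈ Finset.range N, α n * (g n - l)
              = (∑ n ∈ Finset.range N, α n * g n) - (∑ n ∈ Finset.range N, α n) * l := by
            rw [Finset.sum_mul, ← Finset.sum_sub_distrib]
            exact Finset.sum_congr rfl fun n _ => by ring
          rw [hsplit]; ring
  -- now take N → ∞
  have hlim : Tendsto (fun N => (1 - ∑ n ∈ Finset.range N, α n) * l
      + ∑ n ∈ Finset.range N, α n * g n + ε) atTop
      (𝓝 ((1 - ∑' n, α n) * l + ∑' n, α n * g n + ε)) := by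
    refine Tendsto.add (Tendsto.add (Tendsto.mul_const l ?_) ?_) tendsto_const_nhds
    · exact (tendsto_const_nhds.sub hsummable.hasSum.tendsto_sum_nat)
    · exact hgsummable.hasSum.tendsto_sum_nat
  exact ge_of_tendsto hlim (eventually_atTop.mpr ⟨N₀, key⟩)

/-- Upper Dini derivative of `f` at `x` in direction `u`. -/
noncomputable def dini {E : Type*} [NormedAddCommGroup E] [NormedSpace ℝ E]
    (f : E → ℝ) (x u : E) : ℝ :=
  Filter.limsup (fun t : ℝ => (f (x + t • u) - f x) / t) (𝓝[>] (0 : ℝ))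

lemma dini_zero {E : Type*} [NormedAddCommGroup E] [NormedSpace ℝ E]
    (f : E → ℝ) (x : E) : dini f x 0 = 0 := by
  unfold dini
  simp only [smul_zero, add_zero, sub_self, zero_div]
  exact limsup_const 0

set_option maxHeartbeats 1000000 in
theorem stmt_13 {E : Type*} [NormedAddCommGroup E] [NormedSpace ℝ E]
    (Ω : Set E) (hΩ : IsOpen Ω) (xh : E) (hxh : xh ∈ Ω) (r : ℝ) (hr : 0 < r)
    (h : ℕ → E → ℝ) (hinf : E → ℝ)
    -- property (H): each `h n` is Lipschitz on `B(xh,r) ∩ Ω`, ...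
    (hlip : ∀ n, ∃ K : ℝ, ∀ y ∈ Metric.ball xh r ∩ Ω, ∀ z ∈ Metric.ball xh r ∩ Ω,
      |h n y - h n z| ≤ K * ‖y - z‖)
    -- ... each `D⁺ h n (xh)` is sublinear, ...
    (hsub : ∀ n, (∀ u v : E, dini (h n) xh (u + v) ≤ dini (h n) xh u + dini (h n) xh v) ∧
      (∀ u : E, ∀ c : ℝ, 0 ≤ c → dini (h n) xh (c • u) = c * dini (h n) xh u))
    -- ... `hinf` is Lipschitz on `B(xh,r) ∩ Ω`, `hinf xh = lim h n xh`, and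
    -- the Lipschitz seminorms of `h n - hinf` tend to `0`.
    (hlipinf : ∃ K : ℝ, ∀ y ∈ Metric.ball xh r ∩ Ω, ∀ z ∈ Metric.ball xh r ∩ Ω,
      |hinf y - hinf z| ≤ K * ‖y - z‖)
    (hval : Tendsto (fun n => h n xh) atTop (𝓝 (hinf xh)))
    (hsem : ∀ ε > 0, ∃ N : ℕ, ∀ n ≥ N,
      ∀ y ∈ Metric.ball xh r ∩ Ω, ∀ z ∈ Metric.ball xh r ∩ Ω,
        |(h n y - hinf y) - (h n z - hinf z)| ≤ ε * ‖y - z‖) :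
    (∃ x ∈ Ω, ∃ t ∈ Set.Icc (0 : ℝ) 1, ∃ c < (0 : ℝ),
      ∀ n : ℕ, h n x - (1 - t) * h n xh ≤ c) ∨
    (∃ (αinf : ℝ) (α : ℕ → ℝ), 0 ≤ αinf ∧ (∀ n, 0 ≤ α n) ∧ Summable α ∧
      αinf + ∑' n, α n = 1 ∧
      0 ≤ αinf * hinf xh + ∑' n, α n * h n xh ∧
      ∀ u : E, 0 ≤ αinf * dini hinf xh u + ∑' n, α n * dini (h n) xh u) := by
  rcases Classical.em (∃ x ∈ Ω, ∃ t ∈ Set.Icc (0 : ℝ) 1, ∃ c < (0 : ℝ),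
      ∀ n : ℕ, h n x - (1 - t) * h n xh ≤ c) with hl | hL
  · exact Or.inl hl
  right
  choose K hK using hlip
  obtain ⟨Kinf, hKinf⟩ := hlipinf
  have hxhmem : xh ∈ Metric.ball xh r ∩ Ω := ⟨Metric.mem_ball_self hr, hxh⟩
  -- small balls inside the domain
  obtain ⟨ε₁, hε₁, hball⟩ : ∃ ε₁ > 0, Metric.ball xh ε₁ ⊆ Ω := Metric.isOpen_iff.1 hΩ xh hxh
  have hmemδ : ∀ u : E, ∃ δ₀ : ℝ, 0 < δ₀ ∧ δ₀ ≤ 1 ∧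
      ∀ τ ∈ Set.Ioo (0:ℝ) δ₀, xh + τ • u ∈ Metric.ball xh r ∩ Ω := by
    intro u
    refine ⟨min 1 (min r ε₁ / (‖u‖ + 1)), lt_min one_pos (by positivity), min_le_left _ _, ?_⟩
    intro τ hτ
    have hτ0 : (0:ℝ) < τ := hτ.1
    have hτlt : τ < min r ε₁ / (‖u‖ + 1) := lt_of_lt_of_le hτ.2 (min_le_right _ _)
    have hd : dist (xh + τ • u) xh < min r ε₁ := by
      rw [dist_eq_norm, add_sub_cancel_left, norm_smul, Real.norm_eq_abs, abs_of_pos hτ0]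
      have h1 : τ * (‖u‖ + 1) < min r ε₁ := (lt_div_iff₀ (by positivity)).1 hτlt
      nlinarith [norm_nonneg u]
    exact ⟨Metric.mem_ball.2 (hd.trans_le (min_le_left _ _)),
      hball (Metric.mem_ball.2 (hd.trans_le (min_le_right _ _)))⟩
  -- eventual bound on difference quotients of a Lipschitz function
  have hQb : ∀ (f : E → ℝ) (K₀ : ℝ),
      (∀ y ∈ Metric.ball xh r ∩ Ω, ∀ z ∈ Metric.ball xh r ∩ Ω, |f y - f z| ≤ K₀ * ‖y - z‖) →
      ∀ u : E, ∀ᶠ τ in 𝓝[>] (0:ℝ), |(f (xh + τ • u) - f xh)/τ| ≤ K₀ * ‖u‖ := by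
    intro f K₀ hf u
    obtain ⟨δ₀, hδ₀, -, hmem⟩ := hmemδ u
    filter_upwards [Ioo_mem_nhdsGT_of_mem ⟨le_refl (0:ℝ), hδ₀⟩] with τ hτ
    have h1 := hf _ (hmem τ hτ) _ hxhmem
    rw [add_sub_cancel_left, norm_smul, Real.norm_eq_abs, abs_of_pos hτ.1] at h1
    exact quot_bound hτ.1 (le_of_le_of_eq h1 (by ring))
  -- convergence of the Dini derivatives
  have htend : ∀ u : E, Tendsto (fun n => dini (h n) xh u) atTop (𝓝 (dini hinf xh u)) := by
    intro u
    rw [Metric.tendsto_atTop]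
    intro ε hε
    obtain ⟨N, hN⟩ := hsem (ε/(2*(‖u‖+1))) (by positivity)
    refine ⟨N, fun n hn => ?_⟩
    rw [Real.dist_eq]
    obtain ⟨δ₀, hδ₀, -, hmem⟩ := hmemδ u
    have hfg : ∀ᶠ τ in 𝓝[>](0:ℝ),
        |(h n (xh+τ•u) - h n xh)/τ - (hinf (xh+τ•u) - hinf xh)/τ| ≤ ε/2 := by
      filter_upwards [Ioo_mem_nhdsGT_of_mem ⟨le_refl (0:ℝ), hδ₀⟩] with τ hτ
      have h1 := hN n hn _ (hmem τ hτ) _ hxhmem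
      rw [add_sub_cancel_left, norm_smul, Real.norm_eq_abs, abs_of_pos hτ.1] at h1
      have h2 : (h n (xh+τ•u) - h n xh)/τ - (hinf (xh+τ•u) - hinf xh)/τ
          = ((h n (xh+τ•u) - hinf (xh+τ•u)) - (h n xh - hinf xh))/τ := by ring
      rw [h2]
      have h4 : |(h n (xh+τ•u) - hinf (xh+τ•u)) - (h n xh - hinf xh)| ≤ ε/2 * τ := by
        refine h1.trans ?_
        rw [div_mul_eq_mul_div]
        rw [div_le_iff₀ (by positivity)]
        nlinarith [norm_nonneg u, hτ.1]
      exact quot_bound hτ.1 h4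
    have hBn := (hQb (h n) (K n) (hK n) u).mono
      (fun τ hb => hb.trans (le_max_left (K n * ‖u‖) (Kinf * ‖u‖)))
    have hBi := (hQb hinf Kinf hKinf u).mono
      (fun τ hb => hb.trans (le_max_right (K n * ‖u‖) (Kinf * ‖u‖)))
    have habs := abs_limsup_diff_le hfg hBn hBi
    calc |dini (h n) xh u - dini hinf xh u|
        = |limsup (fun τ:ℝ => (h n (xh+τ•u) - h n xh)/τ) (𝓝[>](0:ℝ))
          - limsup (fun τ:ℝ => (hinf (xh+τ•u) - hinf xh)/τ) (𝓝[>](0:ℝ))| := rfl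
      _ ≤ ε/2 := habs
      _ < ε := by linarith
  -- the key "star" inequality, using ¬ left
  have hstar : ∀ lam : ℝ, 0 ≤ lam → lam ≤ 1 → ∀ (u : E) (δ : ℝ), 0 < δ →
      ∃ n, -δ < lam * h n xh + dini (h n) xh u := by
    intro lam hlam0 hlam1 u δ hδ
    by_contra hcon
    push_neg at hcon
    obtain ⟨δ₀, hδ₀, hδ₀1, hmem⟩ := hmemδ u
    have hIoo : Set.Ioo (0:ℝ) δ₀ ∈ 𝓝[>] (0:ℝ) := Ioo_mem_nhdsGT_of_mem ⟨le_refl _, hδ₀⟩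
    have hlimle : lam * hinf xh + dini hinf xh u ≤ -δ :=
      le_of_tendsto ((hval.const_mul lam).add (htend u)) (Eventually.of_forall hcon)
    obtain ⟨N₁, hN₁⟩ := hsem (δ/(8*(‖u‖+1))) (by positivity)
    obtain ⟨N₂, hN₂⟩ := Metric.tendsto_atTop.mp hval (δ/8) (by positivity)
    have hev1 : ∀ᶠ τ in 𝓝[>] (0:ℝ),
        (hinf (xh+τ•u) - hinf xh)/τ < -δ - lam * hinf xh + δ/4 := by
      refine eventually_lt_of_limsup_lt ?_ (bddU_of_abs (hQb hinf Kinf hKinf u))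
      have hrfl : limsup (fun τ:ℝ => (hinf (xh+τ•u) - hinf xh)/τ) (𝓝[>](0:ℝ))
          = dini hinf xh u := rfl
      rw [hrfl]; linarith
    have hev2 : ∀ᶠ τ in 𝓝[>] (0:ℝ), ∀ n ∈ Finset.range (max N₁ N₂),
        (h n (xh+τ•u) - h n xh)/τ < -(lam * h n xh) - δ/2 := by
      rw [eventually_all_finset]
      intro n _
      refine eventually_lt_of_limsup_lt ?_ (bddU_of_abs (hQb (h n) (K n) (hK n) u))
      have hrfl : limsup (fun τ:ℝ => (h n (xh+τ•u) - h n xh)/τ) (𝓝[>](0:ℝ))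
          = dini (h n) xh u := rfl
      rw [hrfl]; linarith [hcon n]
    have hIooEv : ∀ᶠ τ in 𝓝[>] (0:ℝ), τ ∈ Set.Ioo (0:ℝ) δ₀ := eventually_of_mem hIoo (fun τ hτ => hτ)
    obtain ⟨τ, hτIoo, hτ1, hτ2⟩ := (hIooEv.and (hev1.and hev2)).exists
    have hτpos : (0:ℝ) < τ := hτIoo.1
    have hmain : ∀ n, h n (xh + τ • u) - (1 - τ * lam) * h n xh ≤ -(τ * (δ/4)) := by
      intro n
      have hQlam : (h n (xh + τ • u) - h n xh)/τ + lam * h n xh ≤ -(δ/4) := by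
        rcases lt_or_ge n (max N₁ N₂) with hn | hn
        · have h1 := hτ2 n (Finset.mem_range.mpr hn)
          linarith
        · have hn₁ : N₁ ≤ n := le_trans (le_max_left _ _) hn
          have hn₂ : N₂ ≤ n := le_trans (le_max_right _ _) hn
          have hd := hN₁ n hn₁ _ (hmem τ hτIoo) _ hxhmem
          rw [add_sub_cancel_left, norm_smul, Real.norm_eq_abs, abs_of_pos hτpos] at hd
          have hd4 : |(h n (xh + τ • u) - hinf (xh + τ • u)) - (h n xh - hinf xh)| ≤ δ/8 * τ := by
            refine hd.trans ?_
            rw [div_mul_eq_mul_div, div_le_iff₀ (by positivity)]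
            nlinarith [norm_nonneg u]
          have hd5 := quot_bound hτpos hd4
          have hd6 : (h n (xh + τ • u) - h n xh)/τ
              ≤ (hinf (xh + τ • u) - hinf xh)/τ + δ/8 := by
            have heq : ((h n (xh + τ • u) - hinf (xh + τ • u)) - (h n xh - hinf xh))/τ
                = (h n (xh + τ • u) - h n xh)/τ - (hinf (xh + τ • u) - hinf xh)/τ := by ring
            rw [heq] at hd5
            linarith [(abs_le.1 hd5).2]
          have hψ := hN₂ n hn₂
          rw [Real.dist_eq] at hψ
          have hψ2 := (abs_le.1 hψ.le).2
          have hψ3 := (abs_le.1 hψ.le).1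
          have hlamψ : lam * h n xh ≤ lam * hinf xh + δ/8 := by nlinarith
          linarith
      have heq2 : h n (xh + τ • u) - (1 - τ * lam) * h n xh
          = τ * ((h n (xh + τ • u) - h n xh)/τ + lam * h n xh) := by
        field_simp
        ring
      rw [heq2]
      calc τ * ((h n (xh + τ • u) - h n xh)/τ + lam * h n xh)
          ≤ τ * (-(δ/4)) := mul_le_mul_of_nonneg_left hQlam hτpos.le
        _ = -(τ * (δ/4)) := by ring
    refine hL ⟨xh + τ • u, (hmem τ hτIoo).2, τ * lam, ⟨by positivity, ?_⟩,
      -(τ * (δ/4)), by nlinarith, hmain⟩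
    nlinarith [hτIoo.2]
  have hstar' : ∀ mu : ℝ, 0 ≤ mu → ∀ (u : E) (δ : ℝ), 0 < δ →
      ∃ n, -δ < mu * h n xh + dini (h n) xh u := by
    intro mu hmu u δ hδ
    rcases le_or_gt mu 1 with hle | hgt
    · exact hstar mu hmu hle u δ hδ
    · have hmupos : (0:ℝ) < mu := lt_trans one_pos hgt
      obtain ⟨n, hn⟩ := hstar 1 zero_le_one (le_refl 1) (mu⁻¹ • u) (δ/mu) (by positivity)
      refine ⟨n, ?_⟩
      rw [(hsub n).2 u mu⁻¹ (by positivity)] at hn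
      have h3 := mul_lt_mul_of_pos_left hn hmupos
      have h4 : mu * -(δ/mu) = -δ := by field_simp
      have h5 : mu * (1 * h n xh + mu⁻¹ * dini (h n) xh u)
          = mu * h n xh + dini (h n) xh u := by field_simp
      rw [h4, h5] at h3
      exact h3
  -- bounded-continuous-function versions of the sequences
  obtain ⟨Cψ, hCψ⟩ := bound_of_tendsto hval
  set ψb : ℕ →ᵇ ℝ := ofNormedAddCommGroupDiscrete (fun n => h n xh) Cψ
    (by intro n; rw [Real.norm_eq_abs]; exact hCψ n) with hψb
  have hψbap : ∀ n, ψb n = h n xh := fun n => rfl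
  have hφb : ∀ u : E, ∃ gb : ℕ →ᵇ ℝ, ∀ n, gb n = dini (h n) xh u := by
    intro u
    obtain ⟨C, hC⟩ := bound_of_tendsto (htend u)
    exact ⟨ofNormedAddCommGroupDiscrete _ C
      (by intro n; rw [Real.norm_eq_abs]; exact hC n), fun n => rfl⟩
  choose φb hφbap using hφb
  -- the sublinear functional
  set S : (ℕ →ᵇ ℝ) → Set ℝ := fun g =>
    {y | ∃ mu : ℝ, 0 ≤ mu ∧ ∃ u : E, ∀ n, g n + mu * h n xh + dini (h n) xh u ≤ y} with hS
  have hSmemM : ∀ (g : ℕ →ᵇ ℝ) (M : ℝ), (∀ n, g n ≤ M) → M ∈ S g := by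
    intro g M hM
    exact ⟨0, le_refl _, 0, fun n => by rw [dini_zero]; simpa using hM n⟩
  have hSne : ∀ g : ℕ →ᵇ ℝ, (S g).Nonempty := by
    intro g
    exact ⟨‖g‖, hSmemM g ‖g‖ (fun n => (le_abs_self _).trans
      ((Real.norm_eq_abs _ ▸ g.norm_coe_le_norm n : |g n| ≤ ‖g‖)))⟩
  have hSlb : ∀ (g : ℕ →ᵇ ℝ), ∀ y ∈ S g, -‖g‖ ≤ y := by
    intro g y hy
    obtain ⟨mu, hmu, u, hy⟩ := hy
    by_contra hc
    push_neg at hc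
    obtain ⟨n, hn⟩ := hstar' mu hmu u (-‖g‖ - y) (by linarith)
    have h1 := hy n
    have h2 : -‖g‖ ≤ g n := by
      have h3 : |g n| ≤ ‖g‖ := by rw [← Real.norm_eq_abs]; exact g.norm_coe_le_norm n
      linarith [(abs_le.1 h3).1]
    linarith
  have hSbdd : ∀ g : ℕ →ᵇ ℝ, BddBelow (S g) := fun g => ⟨-‖g‖, fun y hy => hSlb g y hy⟩
  set p : (ℕ →ᵇ ℝ) → ℝ := fun g => sInf (S g) with hp
  have hp_le : ∀ (g : ℕ →ᵇ ℝ) (M : ℝ), (∀ n, g n ≤ M) → p g ≤ M :=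
    fun g M hM => csInf_le (hSbdd g) (hSmemM g M hM)
  have hscale : ∀ c : ℝ, 0 < c → ∀ (g : ℕ →ᵇ ℝ) (y : ℝ), y ∈ S g → c * y ∈ S (c • g) := by
    rintro c hc g y ⟨mu, hmu, u, hy⟩
    refine ⟨c * mu, by positivity, c • u, fun n => ?_⟩
    rw [(hsub n).2 u c hc.le]
    have hcoe : (c • g) n = c * g n := rfl
    rw [hcoe]
    have h2 := hy n
    nlinarith
  have hp_hom : ∀ c : ℝ, 0 < c → ∀ g, p (c • g) = c * p g := by
    intro c hc g
    apply le_antisymm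
    · have h1 : p (c • g) / c ≤ p g := by
        refine le_csInf (hSne g) (fun y hy => ?_)
        have h2 := csInf_le (hSbdd (c • g)) (hscale c hc g y hy)
        rw [div_le_iff₀ hc]
        exact h2.trans_eq (mul_comm c y)
      rw [div_le_iff₀ hc] at h1
      linarith [h1.trans_eq (mul_comm (p g) c)]
    · refine le_csInf (hSne (c • g)) (fun y hy => ?_)
      have h2 := hscale c⁻¹ (by positivity) (c • g) y hy
      rw [smul_smul, inv_mul_cancel₀ hc.ne', one_smul] at h2
      have h3 := csInf_le (hSbdd g) h2
      calc c * p g ≤ c * (c⁻¹ * y) := mul_le_mul_of_nonneg_left h3 hc.le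
        _ = y := by field_simp
  have hp_add : ∀ g₁ g₂, p (g₁ + g₂) ≤ p g₁ + p g₂ := by
    intro g₁ g₂
    refine real_le_of_forall_pos (fun ε hε => ?_)
    obtain ⟨y₁, hy₁S, hy₁⟩ := exists_lt_of_csInf_lt (hSne g₁)
      (lt_add_of_pos_right _ (half_pos hε))
    obtain ⟨y₂, hy₂S, hy₂⟩ := exists_lt_of_csInf_lt (hSne g₂)
      (lt_add_of_pos_right _ (half_pos hε))
    obtain ⟨mu₁, hmu₁, u₁, h₁⟩ := hy₁S
    obtain ⟨mu₂, hmu₂, u₂, h₂⟩ := hy₂S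
    have hmem2 : y₁ + y₂ ∈ S (g₁ + g₂) := by
      refine ⟨mu₁ + mu₂, by linarith, u₁ + u₂, fun n => ?_⟩
      have hsubn := (hsub n).1 u₁ u₂
      have hcoe : (g₁ + g₂) n = g₁ n + g₂ n := rfl
      rw [hcoe]
      linarith [h₁ n, h₂ n]
    have h3 := csInf_le (hSbdd _) hmem2
    linarith
  have hFull := myHB p hp_hom hp_add
  obtain ⟨L, hLle⟩ := hFull
  have hL' : ∀ (g : ℕ →ᵇ ℝ) (M : ℝ), (∀ n, g n ≤ M) → L g ≤ M :=
    fun g M hM => (hLle g).trans (hp_le g M hM)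
  have hLψ : 0 ≤ L ψb := by
    have : p (-ψb) ≤ 0 := csInf_le (hSbdd _) ⟨1, zero_le_one, 0, fun n => by
      rw [dini_zero]
      simp [hψbap]⟩
    have h2 := (hLle (-ψb)).trans this
    rw [map_neg] at h2
    linarith
  have hLφ : ∀ u : E, 0 ≤ L (φb u) := by
    intro u
    have : p (-(φb u)) ≤ 0 := csInf_le (hSbdd _) ⟨0, le_refl _, u, fun n => by
      simp [hφbap]⟩
    have h2 := (hLle (-(φb u))).trans this
    rw [map_neg] at h2
    linarith
  obtain ⟨α, hα0, hαsum, hαle, hαdec⟩ := dual_decomp L hL'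
  refine ⟨1 - ∑' n, α n, α, by linarith, hα0, hαsum, by ring, ?_, ?_⟩
  · have := hαdec ψb (hinf xh) (by simpa [hψbap] using hval)
    have h2 : (∑' n, α n * ψb n) = ∑' n, α n * h n xh := by
      exact tsum_congr fun n => by rw [hψbap]
    rw [h2] at this
    linarith [hLψ]
  · intro u
    have := hαdec (φb u) (dini hinf xh u) (by simpa [hφbap] using htend u)
    have h2 : (∑' n, α n * (φb u) n) = ∑' n, α n * dini (h n) xh u := by
      exact tsum_congr fun n => by rw [hφbap]
    rw [h2] at this
    linarith [hLφ u]
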